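/- For every n ≥ 1 and every full-rank lattice L ⊆ ℝⁿ, the Gaussian mass of L at parameter s = λ₁(L)/(2√n) satisfies ρ_s(L) ≤ 1 + 2^{−10n}. (Equivalently, the smoothing parameter of the dual lattice satisfies η_ε(L*) ≤ 2√n/λ₁(L) with ε = 2^{−10n}.) -/

import Mathlib

open Metric Submodule
noncomputable section

/-- The length of a shortest nonzero vector of a set `A`. -/
def lambda1 {E : Type*} [NormedAddCommGroup E] (A : Set E) : ℝ :=
  sInf (norm '' (A \ {0}))

/-- The Gaussian mass `ρ_s(A) = Σ_{a ∈ A} exp(−π‖a/s‖²)` of a set `A`. -/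
def gMass {E : Type*} [NormedAddCommGroup E] (s : ℝ) (A : Set E) : ℝ :=
  ∑' a : A, Real.exp (-Real.pi * (‖(a : E)‖ / s) ^ 2)

open MeasureTheory ENNReal

lemma numeric_core (m : ℕ) (hm : 1 ≤ m) :
    5 * (m:ℝ) * Real.exp (-(4*Real.pi) * m^2) ≤ (2:ℝ)⁻¹^(10:ℕ) * (2:ℝ)⁻¹^m := by
  have hm1 : (1:ℝ) ≤ m := by exact_mod_cast hm
  have hpi : (3:ℝ) ≤ Real.pi := Real.pi_gt_three.le
  have he : (2:ℝ) ≤ Real.exp 1 := by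
    have := Real.exp_one_gt_d9; linarith
  have h1 : Real.exp (-(4*Real.pi) * m^2) ≤ Real.exp (-(12 * m)) := by
    apply Real.exp_le_exp.2
    nlinarith [sq_nonneg ((m:ℝ) - 1)]
  have h2 : (m:ℝ) ≤ Real.exp ((m:ℝ) - 1) := by
    have := Real.add_one_le_exp ((m:ℝ) - 1); linarith
  have h3 : (5:ℝ) ≤ Real.exp 4 := by
    have h4 : ((2:ℝ))^(4:ℕ) ≤ (Real.exp 1)^(4:ℕ) := pow_le_pow_left₀ (by norm_num) he 4
    rw [← Real.exp_nat_mul] at h4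
    norm_num at h4 ⊢
    linarith
  have h5 : ((2:ℝ))^m ≤ Real.exp m := by
    calc ((2:ℝ))^m ≤ (Real.exp 1)^m := pow_le_pow_left₀ (by norm_num) he m
    _ = Real.exp m := by rw [← Real.exp_nat_mul]; ring_nf
  have h6 : ((2:ℝ))^(10:ℕ) ≤ Real.exp 7 := by
    have h4 : ((2.7182818283:ℝ))^(7:ℕ) ≤ (Real.exp 1)^(7:ℕ) :=
      pow_le_pow_left₀ (by norm_num) Real.exp_one_gt_d9.le 7
    rw [← Real.exp_nat_mul] at h4
    norm_num at h4 ⊢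
    nlinarith
  have key : 5 * (m:ℝ) * Real.exp (-(12*m)) * ((2:ℝ)^(10:ℕ) * (2:ℝ)^m) ≤ 1 := by
    have e1 : (0:ℝ) < Real.exp (-(12*m)) := Real.exp_pos _
    have c1 : 5 * (m:ℝ) ≤ Real.exp 4 * Real.exp ((m:ℝ)-1) := by
      nlinarith [Real.exp_pos (4:ℝ), Real.exp_pos ((m:ℝ)-1)]
    have c2 : (2:ℝ)^(10:ℕ) * (2:ℝ)^m ≤ Real.exp 7 * Real.exp m := by
      apply mul_le_mul h6 h5 (by positivity) (Real.exp_nonneg 7)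
    calc 5 * (m:ℝ) * Real.exp (-(12*m)) * ((2:ℝ)^(10:ℕ) * (2:ℝ)^m)
        ≤ (Real.exp 4 * Real.exp ((m:ℝ)-1)) * Real.exp (-(12*m)) * (Real.exp 7 * Real.exp m) := by
          apply mul_le_mul (mul_le_mul_of_nonneg_right c1 e1.le) c2 (by positivity) (by positivity)
      _ = Real.exp (4 + ((m:ℝ)-1) + -(12*m) + (7 + m)) := by
          simp only [← Real.exp_add]
      _ ≤ 1 := by
          rw [Real.exp_le_one_iff]; linarith
  have hpow : (0:ℝ) < (2:ℝ)^(10:ℕ) * (2:ℝ)^m := by positivity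
  have goal2 : 5 * (m:ℝ) * Real.exp (-(12*m)) ≤ ((2:ℝ)^(10:ℕ) * (2:ℝ)^m)⁻¹ := by
    have := (le_div_iff₀ hpow).2 key
    rwa [one_div] at this
  rw [inv_pow, inv_pow, ← mul_inv]
  calc 5 * (m:ℝ) * Real.exp (-(4*Real.pi) * m^2)
      ≤ 5 * (m:ℝ) * Real.exp (-(12*m)) := by
        apply mul_le_mul_of_nonneg_left h1 (by positivity)
    _ ≤ ((2:ℝ)^(10:ℕ) * (2:ℝ)^m)⁻¹ := goal2

lemma scalar_k (n m : ℕ) (hn : 1 ≤ n) (hm : 1 ≤ m) :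
    (2*(m:ℝ)+3)^n * Real.exp (-Real.pi * (4*n*m^2)) ≤ ((2:ℝ)^(10*n))⁻¹ * (2:ℝ)⁻¹^m := by
  have hm1 : (1:ℝ) ≤ m := by exact_mod_cast hm
  have e1 : Real.exp (-Real.pi * (4*n*m^2)) = (Real.exp (-(4*Real.pi) * m^2))^n := by
    rw [← Real.exp_nat_mul]; ring_nf
  have step1 : (2*(m:ℝ)+3) * Real.exp (-(4*Real.pi) * m^2)
      ≤ (2:ℝ)⁻¹^(10:ℕ) * (2:ℝ)⁻¹^m := by
    refine le_trans ?_ (numeric_core m hm)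
    apply mul_le_mul_of_nonneg_right (by linarith) (Real.exp_nonneg _)
  have h2m : (0:ℝ) ≤ (2*(m:ℝ)+3) * Real.exp (-(4*Real.pi) * m^2) := by positivity
  calc (2*(m:ℝ)+3)^n * Real.exp (-Real.pi * (4*n*m^2))
      = ((2*(m:ℝ)+3) * Real.exp (-(4*Real.pi) * m^2))^n := by rw [e1, mul_pow]
    _ ≤ ((2:ℝ)⁻¹^(10:ℕ) * (2:ℝ)⁻¹^m)^n := pow_le_pow_left₀ h2m step1 n
    _ = ((2:ℝ)⁻¹^(10:ℕ))^n * ((2:ℝ)⁻¹^m)^n := mul_pow _ _ _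
    _ ≤ ((2:ℝ)^(10*n))⁻¹ * (2:ℝ)⁻¹^m := by
        have hle1 : ((2:ℝ)⁻¹^m) ≤ 1 := by
          apply pow_le_one₀ (by norm_num) (by norm_num)
        have : ((2:ℝ)⁻¹^m)^n ≤ ((2:ℝ)⁻¹^m)^(1:ℕ) :=
          pow_le_pow_of_le_one (by positivity) hle1 hn
        rw [pow_one] at this
        have heq : ((2:ℝ)⁻¹^(10:ℕ))^n = ((2:ℝ)^(10*n))⁻¹ := by
          rw [← pow_mul, inv_pow]
        rw [heq]
        exact mul_le_mul_of_nonneg_left this (by positivity)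


lemma packing_count (n : ℕ) (hn : 1 ≤ n) (lam : ℝ) (hlam : 0 < lam)
    (F : Finset (EuclideanSpace ℝ (Fin n)))
    (hsep : ∀ x ∈ F, ∀ y ∈ F, x ≠ y → lam ≤ ‖x - y‖)
    (R : ℝ) (hR0 : 0 ≤ R) (hR : ∀ x ∈ F, ‖x‖ ≤ R) :
    (F.card : ℝ) ≤ (2 * R / lam + 1) ^ n := by
  set r : ℝ := lam / 2 with hr
  have hr0 : 0 < r := by positivity
  set μ : Measure (EuclideanSpace ℝ (Fin n)) := volume with hμ
  have hdisj : (F : Set (EuclideanSpace ℝ (Fin n))).PairwiseDisjoint (fun x => ball x r) := by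
    intro x hx y hy hxy
    apply ball_disjoint_ball
    rw [dist_eq_norm]
    have := hsep x hx y hy hxy
    linarith
  have hmeas : μ (⋃ x ∈ F, ball x r) = ∑ x ∈ F, μ (ball x r) :=
    measure_biUnion_finset hdisj (fun _ _ => measurableSet_ball)
  have hballeq : ∀ x : EuclideanSpace ℝ (Fin n),
      μ (ball x r) = ENNReal.ofReal (r ^ n) * μ (ball 0 1) := by
    intro x
    rw [Measure.addHaar_ball_of_pos μ x hr0, finrank_euclideanSpace_fin]
  have hsub : (⋃ x ∈ F, ball x r) ⊆ ball (0:EuclideanSpace ℝ (Fin n)) (R + r) := by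
    intro z hz
    simp only [Set.mem_iUnion, mem_ball] at hz ⊢
    obtain ⟨x, hx, hzx⟩ := hz
    calc dist z 0 ≤ dist z x + dist x 0 := dist_triangle _ _ _
      _ < r + R := by
          have := hR x hx
          rw [dist_zero_right] at *
          linarith
      _ = R + r := by ring
  have hbig : μ (ball (0:EuclideanSpace ℝ (Fin n)) (R + r))
      = ENNReal.ofReal ((R+r) ^ n) * μ (ball 0 1) := by
    rw [Measure.addHaar_ball_of_pos μ _ (by linarith), finrank_euclideanSpace_fin]
  have hv0 : μ (ball (0:EuclideanSpace ℝ (Fin n)) 1) ≠ 0 := (measure_ball_pos μ _ one_pos).ne'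
  have hvt : μ (ball (0:EuclideanSpace ℝ (Fin n)) 1) ≠ ⊤ := measure_ball_lt_top.ne
  have h1 : (F.card : ℝ≥0∞) * ENNReal.ofReal (r ^ n) * μ (ball (0:EuclideanSpace ℝ (Fin n)) 1)
      ≤ ENNReal.ofReal ((R+r) ^ n) * μ (ball (0:EuclideanSpace ℝ (Fin n)) 1) := by
    calc (F.card : ℝ≥0∞) * ENNReal.ofReal (r ^ n) * μ (ball (0:EuclideanSpace ℝ (Fin n)) 1)
        = ∑ x ∈ F, μ (ball x r) := by
          rw [Finset.sum_congr rfl (fun x _ => hballeq x), Finset.sum_const, nsmul_eq_mul,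
            mul_assoc]
      _ = μ (⋃ x ∈ F, ball x r) := hmeas.symm
      _ ≤ μ (ball (0:EuclideanSpace ℝ (Fin n)) (R + r)) := measure_mono hsub
      _ = ENNReal.ofReal ((R+r) ^ n) * μ (ball 0 1) := hbig
  have key : (F.card : ℝ≥0∞) * ENNReal.ofReal (r ^ n) ≤ ENNReal.ofReal ((R+r) ^ n) :=
    (ENNReal.mul_le_mul_iff_left hv0 hvt).1 h1
  have key2 : (F.card : ℝ) * r ^ n ≤ (R+r) ^ n := by
    rw [← ENNReal.ofReal_natCast, ← ENNReal.ofReal_mul (by positivity)] at key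
    exact (ENNReal.ofReal_le_ofReal_iff (by positivity)).1 key
  have heq : (2 * R / lam + 1) = (R + r) / r := by
    rw [hr]; field_simp
  rw [heq, div_pow, le_div_iff₀ (by positivity)]
  exact key2


lemma lattice_finite (n : ℕ) (L : Submodule ℤ (EuclideanSpace ℝ (Fin n)))
    [DiscreteTopology L] (R : ℝ) :
    {x : EuclideanSpace ℝ (Fin n) | x ∈ L ∧ ‖x‖ ≤ R}.Finite := by
  have hset : {x : EuclideanSpace ℝ (Fin n) | x ∈ L ∧ ‖x‖ ≤ R}
      = (L : Set (EuclideanSpace ℝ (Fin n))) ∩ closedBall 0 R := by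
    ext x; simp [mem_closedBall, dist_zero_right]
  rw [hset]
  have hD : DiscreteTopology L.toAddSubgroup := ‹DiscreteTopology L›
  have hclosed : IsClosed (L : Set (EuclideanSpace ℝ (Fin n))) :=
    AddSubgroup.isClosed_of_discrete (H := L.toAddSubgroup)
  have hcpt : IsCompact ((L : Set (EuclideanSpace ℝ (Fin n))) ∩ closedBall 0 R) :=
    (isCompact_closedBall _ _).inter_left hclosed
  apply hcpt.finite
  exact isDiscrete_iff_discreteTopology.mpr <| DiscreteTopology.of_subset (inferInstance : DiscreteTopology (L : Set (EuclideanSpace ℝ (Fin n)))) Set.inter_subset_left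

set_option maxHeartbeats 2000000 in
/-- For every `n ≥ 1` and full-rank lattice `L ⊆ ℝⁿ`, the Gaussian mass of `L` at
parameter `s = λ₁(L)/(2√n)` satisfies `ρ_s(L) ≤ 1 + 2^{−10n}`. -/
theorem gMass_at_smoothing_le
    (n : ℕ) (hn : 1 ≤ n)
    (L : Submodule ℤ (EuclideanSpace ℝ (Fin n))) [DiscreteTopology L]
    (hL : IsZLattice ℝ L) :
    gMass (lambda1 (L : Set (EuclideanSpace ℝ (Fin n))) / (2 * Real.sqrt n))
        (L : Set (EuclideanSpace ℝ (Fin n)))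
      ≤ 1 + ((2 : ℝ) ^ (10 * n))⁻¹ := by
  classical
  haveI : Nonempty (Fin n) := ⟨⟨0, hn⟩⟩
  set lam := lambda1 (L : Set (EuclideanSpace ℝ (Fin n))) with hlamdef
  set s := lam / (2 * Real.sqrt n) with hsdef
  -- a nonzero lattice vector exists
  obtain ⟨x₀, hx₀L, hx₀⟩ : ∃ x, x ∈ L ∧ x ≠ (0 : EuclideanSpace ℝ (Fin n)) := by
    by_contra h
    push_neg at h
    have hsub : (L : Set (EuclideanSpace ℝ (Fin n))) ⊆ {0} := fun x hx => h x hx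
    have htop := hL.span_top
    have hle : Submodule.span ℝ (L : Set (EuclideanSpace ℝ (Fin n)))
        ≤ Submodule.span ℝ ({0} : Set (EuclideanSpace ℝ (Fin n))) := Submodule.span_mono hsub
    rw [htop, Submodule.span_zero_singleton] at hle
    exact bot_ne_top (le_bot_iff.1 hle).symm
  -- discreteness gives a uniform gap at 0
  obtain ⟨ε, εpos, hε⟩ : ∃ ε > 0, ∀ x ∈ L, ‖x‖ < ε → x = 0 := by
    have ho : IsOpen {(0 : L)} := isOpen_discrete _
    rw [isOpen_induced_iff] at ho
    obtain ⟨U, hU, hUeq⟩ := ho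
    have h0U : (0 : EuclideanSpace ℝ (Fin n)) ∈ U := by
      have : (0 : L) ∈ Subtype.val ⁻¹' U := hUeq ▸ rfl
      simpa using this
    obtain ⟨ε, εpos, hball⟩ := Metric.isOpen_iff.1 hU 0 h0U
    refine ⟨ε, εpos, fun x hx hxε => ?_⟩
    have hxU : x ∈ U := hball (by simpa [mem_ball, dist_zero_right] using hxε)
    have : (⟨x, hx⟩ : L) ∈ Subtype.val ⁻¹' U := hxU
    rw [hUeq] at this
    simpa using Subtype.ext_iff.1 this
  have hlow : ∀ x ∈ L, x ≠ (0 : EuclideanSpace ℝ (Fin n)) → lam ≤ ‖x‖ := by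
    intro x hx hxne
    refine csInf_le ⟨0, ?_⟩ ⟨x, ⟨hx, hxne⟩, rfl⟩
    rintro b ⟨y, -, rfl⟩
    exact norm_nonneg y
  have hlam : 0 < lam := by
    refine lt_of_lt_of_le εpos (le_csInf ⟨‖x₀‖, ⟨x₀, ⟨hx₀L, hx₀⟩, rfl⟩⟩ ?_)
    rintro b ⟨y, ⟨hyL, hyne⟩, rfl⟩
    by_contra hlt
    exact hyne (hε y hyL (by linarith [not_le.1 hlt]))
  have hn1 : (1:ℝ) ≤ n := by exact_mod_cast hn
  have hsn : (0:ℝ) < Real.sqrt n := Real.sqrt_pos.2 (by linarith)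
  have hs : 0 < s := by rw [hsdef]; positivity
  have hsep : ∀ x ∈ L, ∀ y ∈ L, x ≠ y → lam ≤ ‖x - y‖ := fun x hx y hy hxy =>
    hlow _ (Submodule.sub_mem L hx hy) (sub_ne_zero.2 hxy)
  -- exponent identity
  have hexp : ∀ x : EuclideanSpace ℝ (Fin n),
      -Real.pi * (‖x‖/s)^2 = -Real.pi * (4*n*(‖x‖/lam)^2) := by
    intro x
    have hsq : Real.sqrt n ^ 2 = n := Real.sq_sqrt (by positivity)
    have : (‖x‖/s)^2 = 4*n*(‖x‖/lam)^2 := by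
      rw [hsdef]
      field_simp
      nlinarith [hsq, sq_nonneg ‖x‖]
    rw [this]
  set G : ↥(L : Set (EuclideanSpace ℝ (Fin n))) → ℝ :=
    fun a => Real.exp (-Real.pi * (‖(a : EuclideanSpace ℝ (Fin n))‖ / s)^2) with hGdef
  set g : ↥(L : Set (EuclideanSpace ℝ (Fin n))) → ℝ≥0∞ :=
    fun a => ENNReal.ofReal (G a) with hgdef
  set z : ↥(L : Set (EuclideanSpace ℝ (Fin n))) := ⟨0, Submodule.zero_mem L⟩ with hzdef
  set P : ℕ → ↥(L : Set (EuclideanSpace ℝ (Fin n))) → Prop :=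
    fun k a => ((k:ℝ)+1)*lam ≤ ‖(a : EuclideanSpace ℝ (Fin n))‖ ∧
      ‖(a : EuclideanSpace ℝ (Fin n))‖ < ((k:ℝ)+2)*lam with hPdef
  have hdecomp : ∀ a, (if a = z then 0 else g a) = ∑' k : ℕ, if P k a then g a else 0 := by
    intro a
    by_cases ha : a = z
    · subst ha
      rw [if_pos rfl]
      symm
      rw [ENNReal.tsum_eq_zero]
      intro k
      rw [if_neg]
      rintro ⟨h1, -⟩
      have hz0 : ‖(z : EuclideanSpace ℝ (Fin n))‖ = 0 := by simp [hzdef]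
      rw [hz0] at h1
      nlinarith [Nat.cast_nonneg (α := ℝ) k]
    · rw [if_neg ha]
      have haL : (a : EuclideanSpace ℝ (Fin n)) ∈ L := a.2
      have hane : (a : EuclideanSpace ℝ (Fin n)) ≠ 0 := fun h => ha (Subtype.ext h)
      have h1 : lam ≤ ‖(a : EuclideanSpace ℝ (Fin n))‖ := hlow _ haL hane
      set u : ℝ := ‖(a : EuclideanSpace ℝ (Fin n))‖ / lam with hu
      have hu1 : 1 ≤ u := (one_le_div hlam).2 h1
      have hu0 : 0 ≤ u := by linarith
      have hulam : u * lam = ‖(a : EuclideanSpace ℝ (Fin n))‖ := by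
        rw [hu]; field_simp
      set k₀ : ℕ := ⌊u⌋₊ - 1 with hk₀
      have hfl1 : 1 ≤ ⌊u⌋₊ := Nat.le_floor (by exact_mod_cast hu1)
      have hcast : (k₀:ℝ) + 1 = (⌊u⌋₊:ℝ) := by
        rw [hk₀, Nat.cast_sub hfl1]; push_cast; ring
      have hPk₀ : P k₀ a := by
        constructor
        · rw [hcast]
          have hfle := Nat.floor_le hu0
          calc ((⌊u⌋₊:ℝ)) * lam ≤ u * lam := by nlinarith
            _ = ‖(a : EuclideanSpace ℝ (Fin n))‖ := hulam
        · have hflt := Nat.lt_floor_add_one u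
          have hc2 : (k₀:ℝ) + 2 = (⌊u⌋₊:ℝ) + 1 := by linarith
          rw [hc2]
          calc ‖(a : EuclideanSpace ℝ (Fin n))‖ = u * lam := hulam.symm
            _ < ((⌊u⌋₊:ℝ) + 1) * lam := by nlinarith
      have huniq : ∀ k : ℕ, P k a → k = k₀ := by
        intro k hk
        obtain ⟨hk1, hk2⟩ := hk
        have hge : (k:ℝ) + 1 ≤ u := by
          rw [hu, le_div_iff₀ hlam]; linarith
        have hlt : u < (k:ℝ) + 2 := by
          rw [hu, div_lt_iff₀ hlam]; linarith
        have hfk : ⌊u⌋₊ = k + 1 := by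
          rw [Nat.floor_eq_iff hu0]
          constructor <;> push_cast <;> linarith
        omega
      rw [tsum_eq_single k₀ (fun k hk => if_neg (fun hPk => hk (huniq k hPk))),
        if_pos hPk₀]
  have hk_bound : ∀ k : ℕ, (∑' a, (if P k a then g a else 0))
      ≤ ENNReal.ofReal (((2:ℝ)^(10*n))⁻¹ * (2:ℝ)⁻¹^(k+1)) := by
    intro k
    set B : ℝ≥0∞ := ENNReal.ofReal (Real.exp (-Real.pi * (4*n*((k:ℝ)+1)^2))) with hB
    have hpt : ∀ a, (if P k a then g a else 0) ≤ (if P k a then B else 0) := by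
      intro a
      by_cases hPa : P k a
      · rw [if_pos hPa, if_pos hPa, hgdef, hB]
        apply ENNReal.ofReal_le_ofReal
        apply Real.exp_le_exp.2
        rw [hexp (a : EuclideanSpace ℝ (Fin n))]
        have h1 : ((k:ℝ)+1) ≤ ‖(a : EuclideanSpace ℝ (Fin n))‖/lam :=
          (le_div_iff₀ hlam).2 (by linarith [hPa.1])
        have h2 : (0:ℝ) ≤ (k:ℝ)+1 := by positivity
        have hpi : (0:ℝ) < Real.pi := Real.pi_pos
        have hX2 : ((k:ℝ)+1)^2 ≤ (‖(a : EuclideanSpace ℝ (Fin n))‖/lam)^2 :=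
          pow_le_pow_left₀ h2 h1 2
        nlinarith [mul_le_mul_of_nonneg_left hX2
          (by positivity : (0:ℝ) ≤ Real.pi * (4*(n:ℝ)))]
      · simp [hPa]
    set T : Set ↥(L : Set (EuclideanSpace ℝ (Fin n))) := {a | P k a} with hT
    have hTfin : T.Finite := by
      have hbig := lattice_finite n L (((k:ℝ)+2)*lam)
      have hpre : ((Subtype.val : ↥(L : Set (EuclideanSpace ℝ (Fin n))) → EuclideanSpace ℝ (Fin n)) ⁻¹'
          {x : EuclideanSpace ℝ (Fin n) | x ∈ L ∧ ‖x‖ ≤ ((k:ℝ)+2)*lam}).Finite :=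
        Set.Finite.preimage Subtype.val_injective.injOn hbig
      apply hpre.subset
      intro a ha
      exact ⟨a.2, le_of_lt ha.2⟩
    have hsum_const : ∑' a, (if P k a then B else 0) = (hTfin.toFinset.card : ℝ≥0∞) * B := by
      have hts := tsum_eq_sum (L := SummationFilter.unconditional _) (s := hTfin.toFinset)
        (f := fun a => if P k a then B else 0)
        (fun b hb => if_neg (fun h => hb (hTfin.mem_toFinset.2 h)))
      have hsum2 : ∑ b ∈ hTfin.toFinset, (if P k b then B else 0)
          = ∑ _b ∈ hTfin.toFinset, B :=
        Finset.sum_congr rfl (fun b hb => if_pos (hTfin.mem_toFinset.1 hb))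
      rw [hts, hsum2, Finset.sum_const, nsmul_eq_mul]
    set F : Finset (EuclideanSpace ℝ (Fin n)) := hTfin.toFinset.image Subtype.val with hF
    have hcardF : F.card = hTfin.toFinset.card :=
      Finset.card_image_of_injective _ Subtype.val_injective
    have hmemF : ∀ x ∈ F, x ∈ L ∧ (((k:ℝ)+1)*lam ≤ ‖x‖ ∧ ‖x‖ < ((k:ℝ)+2)*lam) := by
      intro x hx
      rw [hF, Finset.mem_image] at hx
      obtain ⟨b, hb, rfl⟩ := hx
      exact ⟨b.2, hTfin.mem_toFinset.1 hb⟩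
    have hcard : (hTfin.toFinset.card : ℝ) ≤ (2*(k:ℝ)+5)^n := by
      have h1 : (F.card : ℝ) ≤ (2 * (((k:ℝ)+2)*lam) / lam + 1)^n := by
        refine packing_count n hn lam hlam F ?_ (((k:ℝ)+2)*lam) (by positivity) ?_
        · intro x hx y hy hxy
          exact hsep x (hmemF x hx).1 y (hmemF y hy).1 hxy
        · intro x hx
          exact le_of_lt (hmemF x hx).2.2
      have heq : 2 * (((k:ℝ)+2)*lam) / lam + 1 = 2*(k:ℝ)+5 := by
        field_simp; ring
      rw [heq, hcardF] at h1
      exact h1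
    calc ∑' a, (if P k a then g a else 0) ≤ ∑' a, (if P k a then B else 0) :=
          ENNReal.tsum_le_tsum hpt
      _ = (hTfin.toFinset.card : ℝ≥0∞) * B := hsum_const
      _ ≤ ENNReal.ofReal ((2*(k:ℝ)+5)^n) * B := by
          gcongr ?_ * B
          rw [← ENNReal.ofReal_natCast]
          exact ENNReal.ofReal_le_ofReal hcard
      _ = ENNReal.ofReal ((2*(k:ℝ)+5)^n * Real.exp (-Real.pi * (4*n*((k:ℝ)+1)^2))) := by
          rw [hB, ← ENNReal.ofReal_mul (by positivity)]
      _ ≤ ENNReal.ofReal (((2:ℝ)^(10*n))⁻¹ * (2:ℝ)⁻¹^(k+1)) := by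
          apply ENNReal.ofReal_le_ofReal
          have hsc := scalar_k n (k+1) hn (Nat.le_add_left 1 k)
          push_cast at hsc
          have h55 : (2*(k:ℝ)+5) = 2*((k:ℝ)+1)+3 := by ring
          rw [h55]
          exact hsc
  have hgeo : ∑' k : ℕ, ENNReal.ofReal (((2:ℝ)^(10*n))⁻¹ * (2:ℝ)⁻¹^(k+1))
      = ENNReal.ofReal (((2:ℝ)^(10*n))⁻¹) := by
    have hsumg : Summable (fun k : ℕ => (2:ℝ)⁻¹^(k+1)) := by
      simp_rw [pow_succ']
      exact (summable_geometric_of_lt_one (by norm_num) (by norm_num)).mul_left _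
    have hsum : Summable (fun k : ℕ => ((2:ℝ)^(10*n))⁻¹ * (2:ℝ)⁻¹^(k+1)) :=
      hsumg.mul_left _
    rw [← ENNReal.ofReal_tsum_of_nonneg (fun k => by positivity) hsum]
    congr 1
    rw [tsum_mul_left]
    have hg1 : ∑' k : ℕ, (2:ℝ)⁻¹^(k+1) = 1 := by
      simp_rw [pow_succ']
      rw [tsum_mul_left, tsum_geometric_of_lt_one (by norm_num) (by norm_num)]
      norm_num
    rw [hg1, mul_one]
  have hz1 : g z = 1 := by
    simp [hgdef, hGdef, hzdef]
  have hS : ∑' a, g a ≤ 1 + ENNReal.ofReal (((2:ℝ)^(10*n))⁻¹) := by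
    rw [ENNReal.tsum_eq_add_tsum_ite z, hz1]
    apply add_le_add_right
    have hdec : ∀ a, (@ite _ (a = z) (Classical.propDecidable _) 0 (g a)) = if a = z then 0 else g a :=
      fun a => by congr
    rw [tsum_congr hdec]
    calc ∑' a, (if a = z then 0 else g a)
        = ∑' k : ℕ, ∑' a, (if P k a then g a else 0) := by
          rw [tsum_congr hdecomp, ENNReal.tsum_comm]
      _ ≤ ∑' k : ℕ, ENNReal.ofReal (((2:ℝ)^(10*n))⁻¹ * (2:ℝ)⁻¹^(k+1)) :=
          ENNReal.tsum_le_tsum hk_bound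
      _ = ENNReal.ofReal (((2:ℝ)^(10*n))⁻¹) := hgeo
  -- convert to the real statement
  have hne : (1 + ENNReal.ofReal (((2:ℝ)^(10*n))⁻¹)) ≠ ⊤ := by
    simp [ENNReal.add_ne_top]
  have hGnn : ∀ a, 0 ≤ G a := fun a => (Real.exp_pos _).le
  have hmass : gMass s (L : Set (EuclideanSpace ℝ (Fin n))) = (∑' a, g a).toReal := by
    rw [gMass, ENNReal.tsum_toReal_eq (fun a => ENNReal.ofReal_ne_top)]
    exact tsum_congr fun a => (ENNReal.toReal_ofReal (hGnn a)).symm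
  rw [hmass]
  calc (∑' a, g a).toReal ≤ (1 + ENNReal.ofReal (((2:ℝ)^(10*n))⁻¹)).toReal :=
        ENNReal.toReal_mono hne hS
    _ = 1 + ((2:ℝ)^(10*n))⁻¹ := by
        rw [ENNReal.toReal_add ENNReal.one_ne_top ENNReal.ofReal_ne_top, ENNReal.toReal_one,
          ENNReal.toReal_ofReal (by positivity)]
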